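/- arXiv:1202.2325 — 4 statements merged into one kernel-verified Lean document; each statement's English description precedes it below -/
import Mathlib

section
/- (Equation (6): Σ_{λ⊢n} χ^{(n,n)}_{((n/d_h)^{d_h},λ)}|K_λ| = n! for each h with d_h ≠ 1.) Let n ≥ 2 and let h satisfy 1 < h < n and gcd(n,h) ≠ 1. Let σ ∈ Equiv.Perm (Fin (2*n)) be the n-cycle with σ(i) = i+1 mod n for i < n and σ(i) = i for i ≥ n, and let P be the subgroup of Equiv.Perm (Fin (2*n)) consisting of all permutations π with π(i) = i for every i < n. Then Σ_{π ∈ P} (F n (σ^h * π) − F (n−1) (σ^h * π)) = n!. -/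
set_option maxHeartbeats 1600000

open Finset Equiv

/-- `F k τ` is the number of `k`-element subsets of `Fin m` invariant under `τ`. -/
def F {m : ℕ} (k : ℕ) (τ : Equiv.Perm (Fin m)) : ℕ :=
  ((Finset.univ : Finset (Finset (Fin m))).filter
    (fun s => s.card = k ∧ s.image τ = s)).card

lemma image_eq_iff_maps {m : ℕ} (g : Equiv.Perm (Fin m)) (s : Finset (Fin m)) :
    s.image g = s ↔ ∀ x ∈ s, g x ∈ s := by
  constructor
  · intro h x hx; rw [← h]; exact Finset.mem_image_of_mem g hx
  · intro h
    apply Finset.eq_of_subset_of_card_le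
    · intro y hy; obtain ⟨x, hx, rfl⟩ := Finset.mem_image.1 hy; exact h x hx
    · rw [Finset.card_image_of_injective s g.injective]

lemma high_to_high {n : ℕ} (π : Equiv.Perm (Fin (2*n)))
    (hπ : ∀ i : Fin (2*n), (i:ℕ) < n → π i = i) :
    ∀ x : Fin (2*n), ¬ (x:ℕ) < n → ¬ ((π x : ℕ) < n) := by
  intro x hx hc
  have h1 : π (π x) = π x := hπ _ hc
  have := π.injective h1
  rw [this] at hc
  exact hx hc

lemma card_low {n : ℕ} :
    ((Finset.univ : Finset (Fin (2*n))).filter (fun x : Fin (2*n) => (x:ℕ) < n)).card = n := by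
  conv_rhs => rw [show n = (Finset.univ : Finset (Fin n)).card by simp]
  refine Finset.card_bij' (fun (x : Fin (2*n)) hx => (⟨(x:ℕ), by simp at hx; omega⟩ : Fin n))
    (fun (i : Fin n) _ => (⟨(i:ℕ), by omega⟩ : Fin (2*n)))
    (fun x hx => Finset.mem_univ _) (fun i _ => ?_) (fun x hx => ?_) (fun i hi => ?_)
  · simp only [Finset.mem_filter]
    exact ⟨Finset.mem_univ _, i.isLt⟩
  · apply Fin.ext; simp
  · apply Fin.ext; simp

lemma card_high {n : ℕ} :
    ((Finset.univ : Finset (Fin (2*n))).filter (fun x : Fin (2*n) => ¬ (x:ℕ) < n)).card = n := by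
  have h := Finset.card_filter_add_card_filter_not
    (s := (Finset.univ : Finset (Fin (2*n)))) (p := fun x : Fin (2*n) => (x:ℕ) < n)
  rw [card_low, Finset.card_univ, Fintype.card_fin] at h
  omega

lemma stab_count {n : ℕ} (hn : 0 < n) (s₂ : Finset (Fin (2*n)))
    (hs₂ : ∀ x ∈ s₂, ¬ (x:ℕ) < n) :
    (Finset.univ.filter (fun π : Equiv.Perm (Fin (2*n)) =>
        (∀ i : Fin (2*n), (i:ℕ) < n → π i = i) ∧ s₂.image π = s₂)).card
      = s₂.card.factorial * (n - s₂.card).factorial := by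
  classical
  set f : Fin (2*n) → Fin (2*n+2) := fun x =>
    if (x:ℕ) < n then ⟨(x:ℕ), by omega⟩
    else if x ∈ s₂ then ⟨2*n, by omega⟩ else ⟨2*n+1, by omega⟩ with hf
  have key : ∀ π : Equiv.Perm (Fin (2*n)),
      ((∀ i : Fin (2*n), (i:ℕ) < n → π i = i) ∧ s₂.image π = s₂) ↔ f ∘ π = f := by
    intro π
    constructor
    · rintro ⟨h1, h2⟩
      funext x
      by_cases hx : (x:ℕ) < n
      · simp only [Function.comp_apply, h1 x hx]
      · have hπx : ¬ ((π x : ℕ) < n) := high_to_high π h1 x hx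
        by_cases hxs : x ∈ s₂
        · have hm : π x ∈ s₂ := (image_eq_iff_maps π s₂).1 h2 x hxs
          simp only [Function.comp_apply, hf]
          rw [if_neg hπx, if_neg hx, if_pos hm, if_pos hxs]
        · have hm : π x ∉ s₂ := by
            intro hc
            rw [← h2] at hc
            obtain ⟨y, hy, hyx⟩ := Finset.mem_image.1 hc
            exact hxs (by rwa [← π.injective hyx])
          simp only [Function.comp_apply, hf]
          rw [if_neg hπx, if_neg hx, if_neg hm, if_neg hxs]
    · intro h
      have hval : ∀ x : Fin (2*n), f (π x) = f x := fun x => congrFun h x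
      have hfix : ∀ i : Fin (2*n), (i:ℕ) < n → π i = i := by
        intro i hi
        have hv := hval i
        by_cases hπ : ((π i : ℕ) < n)
        · rw [hf] at hv
          simp only [if_pos hπ, if_pos hi] at hv
          have := congrArg Fin.val hv
          simp only [] at this
          exact Fin.ext this
        · exfalso
          rw [hf] at hv
          simp only [if_neg hπ, if_pos hi] at hv
          by_cases hs : π i ∈ s₂
          · rw [if_pos hs] at hv
            have := congrArg Fin.val hv; simp only [] at this; omega
          · rw [if_neg hs] at hv
            have := congrArg Fin.val hv; simp only [] at this; omega
      refine ⟨hfix, (image_eq_iff_maps π s₂).2 ?_⟩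
      intro x hx
      have hxh : ¬ (x:ℕ) < n := hs₂ x hx
      have hv := hval x
      rw [hf] at hv
      simp only [if_neg hxh, if_pos hx] at hv
      by_cases hπ : ((π x : ℕ) < n)
      · rw [if_pos hπ] at hv
        have := congrArg Fin.val hv; simp only [] at this; omega
      · rw [if_neg hπ] at hv
        by_cases hs : π x ∈ s₂
        · exact hs
        · rw [if_neg hs] at hv
          have := congrArg Fin.val hv; simp only [] at this; omega
  have hfilter : (Finset.univ.filter (fun π : Equiv.Perm (Fin (2*n)) =>
        (∀ i : Fin (2*n), (i:ℕ) < n → π i = i) ∧ s₂.image π = s₂))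
      = Finset.univ.filter (fun π : Equiv.Perm (Fin (2*n)) => f ∘ π = f) := by
    apply Finset.filter_congr
    intro π _
    exact key π
  rw [hfilter, ← Fintype.card_subtype, DomMulAct.stabilizer_card f]
  -- compute the product of factorials of fiber cardinalities
  have hcard1 : Fintype.card {a : Fin (2*n) // f a = ⟨2*n, by omega⟩} = s₂.card := by
    rw [Fintype.card_subtype]
    congr 1
    ext a
    simp only [Finset.mem_filter, Finset.mem_univ, true_and, hf]
    constructor
    · intro hfa
      by_cases hx : (a:ℕ) < n
      · rw [if_pos hx] at hfa
        have := congrArg Fin.val hfa; simp only [] at this; omega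
      · rw [if_neg hx] at hfa
        by_cases hs : a ∈ s₂
        · exact hs
        · rw [if_neg hs] at hfa
          have := congrArg Fin.val hfa; simp only [] at this; omega
    · intro hs
      rw [if_neg (hs₂ a hs), if_pos hs]
  have hcard2 : Fintype.card {a : Fin (2*n) // f a = ⟨2*n+1, by omega⟩} = n - s₂.card := by
    rw [Fintype.card_subtype]
    have hset : (Finset.univ.filter (fun a : Fin (2*n) => f a = ⟨2*n+1, by omega⟩))
        = (Finset.univ.filter (fun x : Fin (2*n) => ¬ (x:ℕ) < n)) \ s₂ := by
      ext a
      simp only [Finset.mem_filter, Finset.mem_univ, true_and, Finset.mem_sdiff, hf]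
      constructor
      · intro hfa
        by_cases hx : (a:ℕ) < n
        · rw [if_pos hx] at hfa
          have := congrArg Fin.val hfa; simp only [] at this; omega
        · rw [if_neg hx] at hfa
          by_cases hs : a ∈ s₂
          · rw [if_pos hs] at hfa
            have := congrArg Fin.val hfa; simp only [] at this; omega
          · exact ⟨hx, hs⟩
      · rintro ⟨hx, hs⟩
        rw [if_neg hx, if_neg hs]
    rw [hset, Finset.card_sdiff_of_subset, card_high]
    intro x hx
    simp only [Finset.mem_filter]
    exact ⟨Finset.mem_univ _, hs₂ x hx⟩
  have hsmall : ∀ i : Fin (2*n+2), (i:ℕ) < 2*n →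
      Fintype.card {a : Fin (2*n) // f a = i} ≤ 1 := by
    intro i hi
    apply Fintype.card_le_one_iff.2
    rintro ⟨a, ha⟩ ⟨b, hb⟩
    have haval : (a:ℕ) < n ∧ (a:ℕ) = (i:ℕ) := by
      rw [hf] at ha
      by_cases hx : (a:ℕ) < n
      · simp only [if_pos hx] at ha
        exact ⟨hx, congrArg Fin.val ha⟩
      · exfalso
        simp only [if_neg hx] at ha
        by_cases hs : a ∈ s₂
        · simp only [if_pos hs] at ha
          have := congrArg Fin.val ha; simp only [] at this; omega
        · simp only [if_neg hs] at ha
          have := congrArg Fin.val ha; simp only [] at this; omega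
    have hbval : (b:ℕ) < n ∧ (b:ℕ) = (i:ℕ) := by
      rw [hf] at hb
      by_cases hx : (b:ℕ) < n
      · simp only [if_pos hx] at hb
        exact ⟨hx, congrArg Fin.val hb⟩
      · exfalso
        simp only [if_neg hx] at hb
        by_cases hs : b ∈ s₂
        · simp only [if_pos hs] at hb
          have := congrArg Fin.val hb; simp only [] at this; omega
        · simp only [if_neg hs] at hb
          have := congrArg Fin.val hb; simp only [] at this; omega
    apply Subtype.ext
    show a = b
    apply Fin.ext
    omega
  have hpair : ({⟨2*n, by omega⟩, ⟨2*n+1, by omega⟩} : Finset (Fin (2*n+2))) ⊆ Finset.univ :=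
    Finset.subset_univ _
  have hone : ∀ i ∈ (Finset.univ : Finset (Fin (2*n+2))),
      i ∉ ({⟨2*n, by omega⟩, ⟨2*n+1, by omega⟩} : Finset (Fin (2*n+2))) →
      (Fintype.card {a : Fin (2*n) // f a = i}).factorial = 1 := by
    intro i _ hit
    simp only [Finset.mem_insert, Finset.mem_singleton] at hit
    push_neg at hit
    have hi : (i:ℕ) < 2*n := by
      have h1 : (i:ℕ) ≠ 2*n := fun hc => hit.1 (Fin.ext hc)
      have h2 : (i:ℕ) ≠ 2*n+1 := fun hc => hit.2 (Fin.ext hc)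
      have := i.isLt
      omega
    rcases Nat.le_one_iff_eq_zero_or_eq_one.1 (hsmall i hi) with h | h <;> rw [h] <;> rfl
  have hne : (⟨2*n, by omega⟩ : Fin (2*n+2)) ≠ (⟨2*n+1, by omega⟩ : Fin (2*n+2)) := by
    simp [Fin.ext_iff]
  rw [← Finset.prod_subset hpair hone]
  rw [Finset.prod_pair hne]
  rw [hcard1, hcard2]

lemma sum_a {n : ℕ} (hn : 0 < n) (i : ℕ) (hi : i ≤ n) :
    ∑ π ∈ (Finset.univ : Finset (Equiv.Perm (Fin (2*n)))).filter
        (fun π => ∀ x : Fin (2*n), (x:ℕ) < n → π x = x),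
      (((Finset.univ.filter (fun x : Fin (2*n) => ¬ (x:ℕ) < n)).powerset).filter
        (fun s₂ => s₂.image π = s₂ ∧ s₂.card = i)).card = n.factorial := by
  classical
  set P := (Finset.univ : Finset (Equiv.Perm (Fin (2*n)))).filter
      (fun π => ∀ x : Fin (2*n), (x:ℕ) < n → π x = x) with hP
  set B := ((Finset.univ.filter (fun x : Fin (2*n) => ¬ (x:ℕ) < n)).powerset) with hB
  calc ∑ π ∈ P, ((B.filter (fun s₂ => s₂.image π = s₂ ∧ s₂.card = i)).card)
      = ∑ π ∈ P, ∑ s₂ ∈ B, (if s₂.image π = s₂ ∧ s₂.card = i then 1 else 0) := by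
        apply Finset.sum_congr rfl
        intro π _
        rw [Finset.card_filter]
    _ = ∑ s₂ ∈ B, ∑ π ∈ P, (if s₂.image π = s₂ ∧ s₂.card = i then 1 else 0) :=
        Finset.sum_comm
    _ = ∑ s₂ ∈ B, (if s₂.card = i then (P.filter (fun π : Equiv.Perm (Fin (2*n)) => s₂.image π = s₂)).card else 0) := by
        apply Finset.sum_congr rfl
        intro s₂ _
        by_cases hc : s₂.card = i
        · rw [if_pos hc, Finset.card_filter]
          apply Finset.sum_congr rfl
          intro π _
          simp [hc]
        · rw [if_neg hc]
          apply Finset.sum_eq_zero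
          intro π _
          simp [hc]
    _ = ∑ s₂ ∈ B.filter (fun s₂ => s₂.card = i),
          (P.filter (fun π : Equiv.Perm (Fin (2*n)) => s₂.image π = s₂)).card := (Finset.sum_filter _ _).symm
    _ = ∑ s₂ ∈ B.filter (fun s₂ => s₂.card = i), (i.factorial * (n - i).factorial) := by
        apply Finset.sum_congr rfl
        intro s₂ hs₂
        simp only [Finset.mem_filter, hB, Finset.mem_powerset] at hs₂
        have hhigh : ∀ x ∈ s₂, ¬ (x:ℕ) < n := by
          intro x hx
          have := hs₂.1 hx
          simp only [Finset.mem_filter] at this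
          exact this.2
        rw [hP, Finset.filter_filter, stab_count hn s₂ hhigh, hs₂.2]
    _ = n.factorial := by
        rw [Finset.sum_const, smul_eq_mul]
        have hcardB : (B.filter (fun s₂ => s₂.card = i)).card = n.choose i := by
          rw [hB, ← Finset.powersetCard_eq_filter, Finset.card_powersetCard, card_high]
        rw [hcardB, ← Nat.choose_mul_factorial_mul_factorial hi, mul_assoc]

lemma F_split {n : ℕ} (g π : Equiv.Perm (Fin (2*n)))
    (hg1 : ∀ x : Fin (2*n), (x:ℕ) < n → ((g x : ℕ) < n))
    (hg2 : ∀ x : Fin (2*n), ¬ (x:ℕ) < n → g x = x)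
    (hπ : ∀ x : Fin (2*n), (x:ℕ) < n → π x = x) (k : ℕ) :
    F k (g * π) = ∑ s₁ ∈ ((Finset.univ.filter (fun x : Fin (2*n) => (x:ℕ) < n)).powerset).filter
        (fun s₁ => s₁.image g = s₁),
      (((Finset.univ.filter (fun x : Fin (2*n) => ¬ (x:ℕ) < n)).powerset).filter
        (fun s₂ => s₂.image π = s₂ ∧ s₁.card + s₂.card = k)).card := by
  classical
  have hτapp : ∀ x : Fin (2*n), (g * π) x = g (π x) := fun x => rfl
  have hτlow : ∀ x : Fin (2*n), (x:ℕ) < n → (g * π) x = g x := by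
    intro x hx; rw [hτapp, hπ x hx]
  have hτhigh : ∀ x : Fin (2*n), ¬ (x:ℕ) < n → (g * π) x = π x := by
    intro x hx; rw [hτapp, hg2 _ (high_to_high π hπ x hx)]
  rw [F]
  rw [Finset.card_eq_sum_card_fiberwise
    (f := fun s => s.filter (fun x : Fin (2*n) => (x:ℕ) < n))
    (t := ((Finset.univ.filter (fun x : Fin (2*n) => (x:ℕ) < n)).powerset).filter
        (fun s₁ => s₁.image g = s₁)) ?hmem]
  case hmem =>
    intro s hs
    simp only [Finset.mem_coe, Finset.mem_filter, Finset.mem_univ, true_and] at hs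
    obtain ⟨hcard, hinv⟩ := hs
    have hmaps := (image_eq_iff_maps (g * π) s).1 hinv
    simp only [Finset.mem_coe, Finset.mem_filter, Finset.mem_powerset]
    refine ⟨?_, ?_⟩
    · intro x hx
      simp only [Finset.mem_filter] at hx ⊢
      exact ⟨Finset.mem_univ _, hx.2⟩
    · apply (image_eq_iff_maps g _).2
      intro x hx
      simp only [Finset.mem_filter] at hx ⊢
      have h1 : (g * π) x = g x := hτlow x hx.2
      exact ⟨h1 ▸ hmaps x hx.1, hg1 x hx.2⟩
  apply Finset.sum_congr rfl
  intro s₁ hs₁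
  simp only [Finset.mem_filter, Finset.mem_powerset] at hs₁
  obtain ⟨hs₁L, hs₁inv⟩ := hs₁
  have hs₁low : ∀ x ∈ s₁, (x:ℕ) < n := by
    intro x hx
    have := hs₁L hx
    simp only [Finset.mem_filter] at this
    exact this.2
  have hs₁maps := (image_eq_iff_maps g s₁).1 hs₁inv
  apply Finset.card_nbij' (i := fun s => s.filter (fun x : Fin (2*n) => ¬ (x:ℕ) < n))
      (j := fun s₂ => s₁ ∪ s₂)
  · -- hi
    intro s hs
    simp only [Finset.mem_coe, Finset.mem_filter, Finset.mem_univ, true_and] at hs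
    obtain ⟨⟨hcard, hinv⟩, hfib⟩ := hs
    have hmaps := (image_eq_iff_maps (g * π) s).1 hinv
    simp only [Finset.mem_coe, Finset.mem_filter, Finset.mem_powerset]
    refine ⟨?_, ?_, ?_⟩
    · intro x hx
      simp only [Finset.mem_filter] at hx ⊢
      exact ⟨Finset.mem_univ _, hx.2⟩
    · apply (image_eq_iff_maps π _).2
      intro x hx
      simp only [Finset.mem_filter] at hx ⊢
      have h1 : (g * π) x = π x := hτhigh x hx.2
      exact ⟨h1 ▸ hmaps x hx.1, high_to_high π hπ x hx.2⟩
    · have hsplit := Finset.card_filter_add_card_filter_not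
        (s := s) (p := fun x : Fin (2*n) => (x:ℕ) < n)
      rw [hfib, hcard] at hsplit
      exact hsplit
  · -- hj
    intro s₂ hs₂
    simp only [Finset.mem_coe, Finset.mem_filter, Finset.mem_powerset] at hs₂
    obtain ⟨hs₂H, hs₂inv, hs₂card⟩ := hs₂
    have hs₂high : ∀ x ∈ s₂, ¬ (x:ℕ) < n := by
      intro x hx
      have := hs₂H hx
      simp only [Finset.mem_filter] at this
      exact this.2
    have hs₂maps := (image_eq_iff_maps π s₂).1 hs₂inv
    have hdisj : Disjoint s₁ s₂ := by
      rw [Finset.disjoint_left]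
      intro x hx1 hx2
      exact hs₂high x hx2 (hs₁low x hx1)
    simp only [Finset.mem_coe, Finset.mem_filter, Finset.mem_univ, true_and]
    refine ⟨⟨?_, ?_⟩, ?_⟩
    · rw [Finset.card_union_of_disjoint hdisj, hs₂card]
    · apply (image_eq_iff_maps _ _).2
      intro x hx
      rcases Finset.mem_union.1 hx with hx1 | hx2
      · rw [hτlow x (hs₁low x hx1)]
        exact Finset.mem_union_left _ (hs₁maps x hx1)
      · rw [hτhigh x (hs₂high x hx2)]
        exact Finset.mem_union_right _ (hs₂maps x hx2)
    · rw [Finset.filter_union]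
      rw [Finset.filter_eq_self.2 hs₁low,
        Finset.filter_eq_empty_iff.2 (fun x hx => by simpa using hs₂high x hx),
        Finset.union_empty]
  · -- left inverse
    intro s hs
    simp only [Finset.mem_coe, Finset.mem_filter, Finset.mem_univ, true_and] at hs
    rw [← hs.2]
    exact Finset.filter_union_filter_not_eq _ s
  · -- right inverse
    intro s₂ hs₂
    simp only [Finset.mem_coe, Finset.mem_filter, Finset.mem_powerset] at hs₂
    have hs₂high : ∀ x ∈ s₂, ¬ (x:ℕ) < n := by
      intro x hx
      have := hs₂.1 hx
      simp only [Finset.mem_filter] at this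
      exact this.2
    beta_reduce
    rw [Finset.filter_union]
    rw [Finset.filter_eq_empty_iff.2 (fun x hx => by simp [hs₁low x hx]),
      Finset.filter_eq_self.2 hs₂high, Finset.empty_union]

lemma pow_facts {n : ℕ} (hn : 0 < n) (σ : Equiv.Perm (Fin (2*n)))
    (hσ : ∀ i : Fin (2*n), ((σ i : ℕ) = if (i:ℕ) < n then ((i:ℕ)+1) % n else (i:ℕ))) (h : ℕ) :
    (∀ x : Fin (2*n), (x:ℕ) < n → (((σ^h) x : ℕ) < n)) ∧
    (∀ x : Fin (2*n), ¬ (x:ℕ) < n → (σ^h) x = x) := by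
  induction h with
  | zero => simp
  | succ m ih =>
    have hlow : ∀ x : Fin (2*n), (x:ℕ) < n → ((σ x : ℕ) < n) := by
      intro x hx
      rw [hσ x, if_pos hx]
      exact Nat.mod_lt _ hn
    have hfix : ∀ x : Fin (2*n), ¬ (x:ℕ) < n → σ x = x := by
      intro x hx
      apply Fin.ext
      rw [hσ x, if_neg hx]
    constructor
    · intro x hx
      rw [pow_succ]
      exact ih.1 _ (hlow x hx)
    · intro x hx
      rw [pow_succ]
      show (σ^m) (σ x) = x
      rw [hfix x hx]
      exact ih.2 x hx

/-- Equation (6): for each `h` with `1 < h < n` and `gcd(n,h) ≠ 1`,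
`Σ_{λ⊢n} χ^{(n,n)}_{((n/d_h)^{d_h},λ)}|K_λ| = n!`, expressed as
`Σ_{π ∈ P} (F n (σ^h π) - F (n-1) (σ^h π)) = n!` where `P ≅ S_n` fixes all `i < n`. -/
theorem eq6 (n h : ℕ) (hn : 2 ≤ n) (hh1 : 1 < h) (hh2 : h < n)
    (hd : Nat.gcd n h ≠ 1) (σ : Equiv.Perm (Fin (2 * n)))
    (hσ : ∀ i : Fin (2 * n),
      ((σ i : ℕ) = if (i : ℕ) < n then ((i : ℕ) + 1) % n else (i : ℕ))) :
    ∑ π ∈ (Finset.univ : Finset (Equiv.Perm (Fin (2 * n)))).filter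
        (fun π => ∀ i : Fin (2 * n), (i : ℕ) < n → π i = i),
      ((F n (σ ^ h * π) : ℤ) - (F (n - 1) (σ ^ h * π) : ℤ)) = (n.factorial : ℤ) := by
  classical
  have hn0 : 0 < n := by omega
  obtain ⟨hg1, hg2⟩ := pow_facts hn0 σ hσ h
  set P := (Finset.univ : Finset (Equiv.Perm (Fin (2 * n)))).filter
      (fun π => ∀ i : Fin (2 * n), (i : ℕ) < n → π i = i) with hPdef
  set Lset := (Finset.univ : Finset (Fin (2*n))).filter (fun x : Fin (2*n) => (x:ℕ) < n)
    with hLset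
  set P₁ := (Lset.powerset).filter (fun s₁ => s₁.image (σ^h) = s₁) with hP₁
  have main : ∀ k : ℕ, k ≤ n → ∑ π ∈ P, F k (σ ^ h * π)
      = (P₁.filter (fun s₁ => s₁.card ≤ k)).card * n.factorial := by
    intro k hk
    have step1 : ∑ π ∈ P, F k (σ ^ h * π) = ∑ π ∈ P, ∑ s₁ ∈ P₁,
        (((Finset.univ.filter (fun x : Fin (2*n) => ¬ (x:ℕ) < n)).powerset).filter
          (fun s₂ => s₂.image π = s₂ ∧ s₁.card + s₂.card = k)).card := by
      apply Finset.sum_congr rfl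
      intro π hπmem
      rw [hPdef, Finset.mem_filter] at hπmem
      exact F_split (σ^h) π hg1 hg2 hπmem.2 k
    rw [step1, Finset.sum_comm]
    have step2 : ∀ s₁ ∈ P₁, (∑ π ∈ P,
        (((Finset.univ.filter (fun x : Fin (2*n) => ¬ (x:ℕ) < n)).powerset).filter
          (fun s₂ => s₂.image π = s₂ ∧ s₁.card + s₂.card = k)).card)
        = if s₁.card ≤ k then n.factorial else 0 := by
      intro s₁ hs₁
      by_cases hck : s₁.card ≤ k
      · rw [if_pos hck]
        calc ∑ π ∈ P,
            (((Finset.univ.filter (fun x : Fin (2*n) => ¬ (x:ℕ) < n)).powerset).filter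
              (fun s₂ => s₂.image π = s₂ ∧ s₁.card + s₂.card = k)).card
            = ∑ π ∈ P,
            (((Finset.univ.filter (fun x : Fin (2*n) => ¬ (x:ℕ) < n)).powerset).filter
              (fun s₂ => s₂.image π = s₂ ∧ s₂.card = k - s₁.card)).card := by
              apply Finset.sum_congr rfl
              intro π _
              congr 1
              apply Finset.filter_congr
              intro s₂ _
              constructor
              · rintro ⟨h1, h2⟩; exact ⟨h1, by omega⟩
              · rintro ⟨h1, h2⟩; exact ⟨h1, by omega⟩
          _ = n.factorial := sum_a hn0 (k - s₁.card) (by omega)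
      · rw [if_neg hck]
        apply Finset.sum_eq_zero
        intro π _
        rw [Finset.card_eq_zero]
        apply Finset.filter_eq_empty_iff.2
        intro s₂ _
        rintro ⟨h1, h2⟩
        omega
    rw [Finset.sum_congr rfl step2, ← Finset.sum_filter, Finset.sum_const, smul_eq_mul]
  have hLmem : Lset ∈ P₁ := by
    rw [hP₁, Finset.mem_filter, Finset.mem_powerset]
    refine ⟨subset_rfl, (image_eq_iff_maps _ _).2 ?_⟩
    intro x hx
    rw [hLset, Finset.mem_filter] at hx ⊢
    exact ⟨Finset.mem_univ _, hg1 x hx.2⟩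
  have hcardL : Lset.card = n := card_low
  have hfull : P₁.filter (fun s₁ => s₁.card ≤ n) = P₁ := by
    apply Finset.filter_true_of_mem
    intro s₁ hs₁
    rw [hP₁, Finset.mem_filter, Finset.mem_powerset] at hs₁
    calc s₁.card ≤ Lset.card := Finset.card_le_card hs₁.1
    _ = n := hcardL
  have hn1 : P₁.filter (fun s₁ => s₁.card ≤ n - 1) = P₁.erase Lset := by
    ext s₁
    simp only [Finset.mem_filter, Finset.mem_erase]
    constructor
    · rintro ⟨hm, hcc⟩
      refine ⟨?_, hm⟩
      rintro rfl
      rw [hcardL] at hcc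
      omega
    · rintro ⟨hne, hm⟩
      refine ⟨hm, ?_⟩
      have hsub : s₁ ⊆ Lset := Finset.mem_powerset.1 (Finset.mem_filter.1 hm).1
      have hlt : s₁.card < Lset.card :=
        Finset.card_lt_card (ssubset_of_subset_of_ne hsub hne)
      omega
  have hc1 : 1 ≤ P₁.card := Finset.card_pos.2 ⟨Lset, hLmem⟩
  have hA := main n le_rfl
  have hB := main (n-1) (by omega)
  rw [hfull] at hA
  rw [hn1, Finset.card_erase_of_mem hLmem] at hB
  rw [Finset.sum_sub_distrib, ← Nat.cast_sum, ← Nat.cast_sum, hA, hB]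
  rw [Nat.cast_mul, Nat.cast_mul, Nat.cast_sub hc1]
  push_cast
  ring
end

section
/- (Murnaghan–Nakayama evaluation used in Proposition 3.3: χ^{(n,n)}_{(n,λ)} = χ^{(n)}_λ − χ^{(n-1,1)}_λ.) Let n ≥ 2. Let σ ∈ Equiv.Perm (Fin (2*n)) be the n-cycle with σ(i) = i+1 mod n for i < n and σ(i) = i for i ≥ n, and let π ∈ Equiv.Perm (Fin (2*n)) satisfy π(i) = i for every i < n. Then F n (σ*π) − F (n−1) (σ*π) = 2 − f(π), where f(π) is the number of indices i with n ≤ i < 2n and π(i) = i. -/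
lemma perm_image_eq_iff {m : ℕ} (τ : Equiv.Perm (Fin m)) (s : Finset (Fin m)) :
    s.image τ = s ↔ ∀ a ∈ s, τ a ∈ s := by
  constructor
  · intro h a ha; rw [← h]; exact Finset.mem_image_of_mem _ ha
  · intro h
    apply Finset.eq_of_subset_of_card_le
    · intro b hb
      obtain ⟨a, ha, rfl⟩ := Finset.mem_image.mp hb
      exact h a ha
    · rw [Finset.card_image_of_injective _ τ.injective]

/-- Murnaghan–Nakayama evaluation in Proposition 3.3:
`χ^{(n,n)}_{(n,λ)} = χ^{(n)}_λ - χ^{(n-1,1)}_λ`, expressed as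
`F n (σπ) - F (n-1) (σπ) = 2 - f(π)` where `f(π)` counts the fixed points of `π`
among the last `n` points. -/
theorem mn_eval_nn (n : ℕ) (hn : 2 ≤ n) (σ π : Equiv.Perm (Fin (2 * n)))
    (hσ : ∀ i : Fin (2 * n),
      ((σ i : ℕ) = if (i : ℕ) < n then ((i : ℕ) + 1) % n else (i : ℕ)))
    (hπ : ∀ i : Fin (2 * n), (i : ℕ) < n → π i = i) :
    (F n (σ * π) : ℤ) - (F (n - 1) (σ * π) : ℤ)
      = 2 - ((Finset.univ.filter
          (fun i : Fin (2 * n) => n ≤ (i : ℕ) ∧ π i = i)).card : ℤ) := by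
  set τ := σ * π with hτdef
  have hnpos : 0 < n := by omega
  -- π preserves the upper block
  have hπB : ∀ i : Fin (2 * n), n ≤ (i : ℕ) → n ≤ ((π i : ℕ)) := by
    intro i hi
    by_contra h
    push_neg at h
    have h1 : π (π i) = π i := hπ _ h
    have h2 := π.injective h1
    rw [h2] at h; omega
  -- action of τ on lower block
  have hτlt : ∀ i : Fin (2 * n), (i : ℕ) < n → ((τ i : ℕ)) = ((i : ℕ) + 1) % n := by
    intro i hi
    have : τ i = σ i := by
      simp only [hτdef, Equiv.Perm.mul_apply, hπ i hi]
    rw [this, hσ i, if_pos hi]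
  -- action of τ on upper block
  have hτge : ∀ i : Fin (2 * n), n ≤ (i : ℕ) → τ i = π i := by
    intro i hi
    have h1 : n ≤ ((π i : ℕ)) := hπB i hi
    have : τ i = σ (π i) := rfl
    rw [this]
    apply Fin.ext
    rw [hσ (π i), if_neg (by omega)]
  -- the two blocks
  set A : Finset (Fin (2 * n)) := Finset.univ.filter (fun i => (i : ℕ) < n) with hA
  set B : Finset (Fin (2 * n)) := Finset.univ.filter (fun i => n ≤ (i : ℕ)) with hB
  have hmemA : ∀ i : Fin (2 * n), i ∈ A ↔ (i : ℕ) < n := by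
    intro i; rw [hA, Finset.mem_filter]; simp
  have hmemB : ∀ i : Fin (2 * n), i ∈ B ↔ n ≤ (i : ℕ) := by
    intro i; rw [hB, Finset.mem_filter]; simp
  have hBcompl : B = Aᶜ := by
    ext i; simp [hA, hB]
  have hAcard : A.card = n := by
    have h1 : A = (Finset.range n).attachFin (fun m hm => by
        rw [Finset.mem_range] at hm; omega) := by
      ext i
      rw [hmemA, Finset.mem_attachFin, Finset.mem_range]
    rw [h1, Finset.card_attachFin, Finset.card_range]
  have hBcard : B.card = n := by
    rw [hBcompl, Finset.card_compl, Fintype.card_fin, hAcard]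
    omega
  -- orbit lemma: an invariant set containing a point of the lower block contains all of A
  have orbit : ∀ s : Finset (Fin (2 * n)), (∀ a ∈ s, τ a ∈ s) →
      ∀ a ∈ s, (a : ℕ) < n → A ⊆ s := by
    intro s hs a ha hal
    have key : ∀ k : ℕ, ∃ c ∈ s, (c : ℕ) = ((a : ℕ) + k) % n := by
      intro k
      induction k with
      | zero => exact ⟨a, ha, by simp [Nat.mod_eq_of_lt hal]⟩
      | succ k ih =>
        obtain ⟨c, hc, hcv⟩ := ih
        have hcl : (c : ℕ) < n := by rw [hcv]; exact Nat.mod_lt _ hnpos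
        refine ⟨τ c, hs c hc, ?_⟩
        rw [hτlt c hcl, hcv, Nat.mod_add_mod, Nat.add_assoc]
    intro b hb
    rw [hmemA] at hb
    obtain ⟨c, hc, hcv⟩ := key ((b : ℕ) + n - (a : ℕ))
    have : ((a : ℕ) + ((b : ℕ) + n - (a : ℕ))) = (b : ℕ) + n := by omega
    rw [this, Nat.add_mod_right, Nat.mod_eq_of_lt hb] at hcv
    rwa [show b = c from Fin.ext hcv.symm]
  -- B is invariant
  have hBinv : B.image τ = B := by
    rw [perm_image_eq_iff]
    intro a ha
    rw [hmemB] at ha ⊢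
    rw [hτge a ha]
    exact hπB a ha
  -- A is invariant
  have hAinv : A.image τ = A := by
    rw [perm_image_eq_iff]
    intro a ha
    rw [hmemA] at ha ⊢
    rw [hτlt a ha]
    exact Nat.mod_lt _ hnpos
  -- invariant sets avoiding A are contained in B
  have subB : ∀ s : Finset (Fin (2 * n)), (∀ a ∈ s, τ a ∈ s) →
      (∀ a ∈ s, ¬ ((a : ℕ) < n)) → s ⊆ B := by
    intro s _ h a ha
    rw [hmemB]
    have := h a ha
    omega
  -- F n τ = 2
  have hFn : F n τ = 2 := by
    have hset : (Finset.univ : Finset (Finset (Fin (2 * n)))).filter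
        (fun s => s.card = n ∧ s.image τ = s) = {A, B} := by
      ext s
      simp only [Finset.mem_filter, Finset.mem_univ, true_and, Finset.mem_insert,
        Finset.mem_singleton]
      constructor
      · rintro ⟨hcard, hinv⟩
        rw [perm_image_eq_iff] at hinv
        by_cases hex : ∃ a ∈ s, (a : ℕ) < n
        · obtain ⟨a, ha, hal⟩ := hex
          left
          have hsub := orbit s hinv a ha hal
          exact (Finset.eq_of_subset_of_card_le hsub (by rw [hcard, hAcard])).symm
        · push_neg at hex
          right
          have hsub := subB s hinv (fun a ha h => absurd (hex a ha) (by omega))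
          exact Finset.eq_of_subset_of_card_le hsub (by rw [hcard, hBcard])
      · rintro (rfl | rfl)
        · exact ⟨hAcard, hAinv⟩
        · exact ⟨hBcard, hBinv⟩
    have hne : A ≠ B := by
      intro h
      have hx := Finset.ext_iff.mp h (⟨0, by omega⟩ : Fin (2 * n))
      rw [hmemA, hmemB] at hx
      simp at hx
      omega
    unfold F; rw [hset, Finset.card_insert_of_notMem (by simpa using hne), Finset.card_singleton]
  -- F (n-1) τ = number of fixed points of π in B
  have hFn1 : F (n - 1) τ = (B.filter (fun i => π i = i)).card := by
    have hset : (Finset.univ : Finset (Finset (Fin (2 * n)))).filter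
        (fun s => s.card = n - 1 ∧ s.image τ = s)
        = (B.filter (fun i => π i = i)).image (fun x => B.erase x) := by
      ext s
      simp only [Finset.mem_filter, Finset.mem_univ, true_and, Finset.mem_image]
      constructor
      · rintro ⟨hcard, hinv⟩
        rw [perm_image_eq_iff] at hinv
        -- s avoids A
        have hnoA : ∀ a ∈ s, ¬ ((a : ℕ) < n) := by
          intro a ha hal
          have hsub := orbit s hinv a ha hal
          have := Finset.card_le_card hsub
          rw [hAcard, hcard] at this
          omega
        have hsubB := subB s hinv hnoA
        -- B \ s is a singleton
        have hsd : (B \ s).card = 1 := by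
          rw [Finset.card_sdiff_of_subset hsubB, hBcard, hcard]
          omega
        obtain ⟨x, hx⟩ := Finset.card_eq_one.mp hsd
        have hxB : x ∈ B := by
          have : x ∈ B \ s := hx ▸ Finset.mem_singleton_self x
          exact (Finset.mem_sdiff.mp this).1
        have hxs : x ∉ s := by
          have : x ∈ B \ s := hx ▸ Finset.mem_singleton_self x
          exact (Finset.mem_sdiff.mp this).2
        have hse : s = B.erase x := by
          ext y
          rw [Finset.mem_erase]
          constructor
          · intro hy
            exact ⟨fun h => hxs (h ▸ hy), hsubB hy⟩
          · rintro ⟨hyx, hyB⟩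
            by_contra hys
            have : y ∈ B \ s := Finset.mem_sdiff.mpr ⟨hyB, hys⟩
            rw [hx, Finset.mem_singleton] at this
            exact hyx this
        -- π fixes x
        have hfix : π x = x := by
          by_contra hne
          -- τ maps s into s, i.e. π maps B.erase x into itself
          have hmaps : ∀ y ∈ s, π y ∈ s := by
            intro y hy
            have hyB : n ≤ (y : ℕ) := (hmemB y).mp (hsubB hy)
            have := hinv y hy
            rwa [hτge y hyB] at this
          -- π x ∈ B
          have hπxB : π x ∈ B := by
            rw [hmemB]; exact hπB x ((hmemB x).mp hxB)
          have himg : s.image π = s := by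
            apply Finset.eq_of_subset_of_card_le
            · intro b hb
              obtain ⟨a, ha, rfl⟩ := Finset.mem_image.mp hb
              exact hmaps a ha
            · rw [Finset.card_image_of_injective _ π.injective]
          have hπxs : π x ∈ s := by
            rw [hse, Finset.mem_erase]
            exact ⟨hne, hπxB⟩
          rw [← himg, Finset.mem_image] at hπxs
          obtain ⟨y, hy, hyx⟩ := hπxs
          exact hxs (π.injective hyx ▸ hy)
        exact ⟨x, ⟨hxB, hfix⟩, hse.symm⟩
      · rintro ⟨x, ⟨hxB, hfix⟩, rfl⟩
        constructor
        · rw [Finset.card_erase_of_mem hxB, hBcard]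
        · rw [perm_image_eq_iff]
          intro y hy
          rw [Finset.mem_erase] at hy ⊢
          obtain ⟨hyx, hyB⟩ := hy
          have hyn : n ≤ (y : ℕ) := (hmemB y).mp hyB
          rw [hτge y hyn]
          refine ⟨fun h => hyx (π.injective (h.trans hfix.symm)), ?_⟩
          rw [hmemB]
          exact hπB y hyn
    unfold F; rw [hset, Finset.card_image_of_injOn]
    intro x hx y hy hxy
    exact Finset.erase_injOn B (Finset.mem_coe.mpr ((Finset.mem_filter.mp hx).1))
      ((Finset.mem_filter.mp hy).1) hxy
  -- conclude
  have hBfix : Finset.univ.filter (fun i : Fin (2 * n) => n ≤ (i : ℕ) ∧ π i = i)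
      = B.filter (fun i => π i = i) := by
    rw [hB, Finset.filter_filter]
  rw [hFn, hFn1, hBfix]
  have hle : (B.filter (fun i => π i = i)).card ≤ n := by
    calc (B.filter (fun i => π i = i)).card ≤ B.card := Finset.card_filter_le _ _
    _ = n := hBcard
  push_cast
  ring
end

section
/- (Murnaghan–Nakayama evaluation used in Theorem 3.5: χ^{(2n-k,k)}_{(n,λ)} = χ^{(n-k,k)}_λ for n ≥ 2k.) Let k ≥ 1 and n ≥ 2k. Let σ ∈ Equiv.Perm (Fin (2*n)) be the n-cycle with σ(i) = i+1 mod n for i < n and σ(i) = i for i ≥ n, and let π ∈ Equiv.Perm (Fin (2*n)) satisfy π(i) = i for every i < n. Then F k (σ*π) − F (k−1) (σ*π) = G k π − G (k−1) π, where for j ∈ ℕ, G j π denotes the number of j-element Finsets s ⊆ Fin (2*n) with s.image π = s and every element i of s satisfying n ≤ i. -/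
/-- `G n j π` is the number of `j`-element subsets of `Fin m` invariant under `π`
all of whose elements are `≥ n`. -/
def G {m : ℕ} (n j : ℕ) (π : Equiv.Perm (Fin m)) : ℕ :=
  ((Finset.univ : Finset (Finset (Fin m))).filter
    (fun s => s.card = j ∧ s.image π = s ∧ ∀ i : Fin m, i ∈ s → n ≤ (i : ℕ))).card

lemma key_FG {n : ℕ} (hn0 : 0 < n) (σ π : Equiv.Perm (Fin (2 * n)))
    (hσ : ∀ i : Fin (2 * n),
      ((σ i : ℕ) = if (i : ℕ) < n then ((i : ℕ) + 1) % n else (i : ℕ)))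
    (hπ : ∀ i : Fin (2 * n), (i : ℕ) < n → π i = i)
    (j : ℕ) (hj : j < n) : F j (σ * π) = G n j π := by
  -- π maps the upper block to itself
  have hπge : ∀ x : Fin (2 * n), n ≤ (x : ℕ) → n ≤ ((π x : Fin (2 * n)) : ℕ) := by
    intro x hx
    by_contra h
    push_neg at h
    have h1 : π (π x) = π x := hπ (π x) h
    have h2 : π x = x := π.injective h1
    rw [h2] at h; omega
  -- σ fixes the upper block
  have hσfix : ∀ y : Fin (2 * n), n ≤ (y : ℕ) → σ y = y := by
    intro y hy
    have := hσ y
    rw [if_neg (by omega)] at this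
    exact Fin.ext this
  unfold F G
  congr 1
  apply Finset.filter_congr
  intro s _
  constructor
  · rintro ⟨hcard, hinv⟩
    -- all elements of s are ≥ n
    have hge : ∀ i : Fin (2 * n), i ∈ s → n ≤ (i : ℕ) := by
      by_contra h
      push_neg at h
      obtain ⟨i, his, hilt⟩ := h
      have claim : ∀ m : ℕ, ∃ x : Fin (2 * n), x ∈ s ∧ (x : ℕ) = ((i : ℕ) + m) % n := by
        intro m
        induction m with
        | zero => exact ⟨i, his, by simp [Nat.mod_eq_of_lt hilt]⟩
        | succ m ih =>
          obtain ⟨x, hxs, hxv⟩ := ih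
          have hxlt : (x : ℕ) < n := by
            rw [hxv]; exact Nat.mod_lt _ hn0
          have hmem : (σ * π) x ∈ s := by
            rw [← hinv]; exact Finset.mem_image_of_mem _ hxs
          refine ⟨(σ * π) x, hmem, ?_⟩
          have hpx : π x = x := hπ x hxlt
          have : ((σ * π) x : ℕ) = ((x : ℕ) + 1) % n := by
            rw [Equiv.Perm.mul_apply, hpx, hσ x, if_pos hxlt]
          rw [this, hxv, Nat.mod_add_mod]
          ring_nf
      have hall : ∀ r : ℕ, r < n → ∃ x ∈ s, (x : ℕ) = r := by
        intro r hr
        obtain ⟨x, hxs, hxv⟩ := claim (n - (i : ℕ) + r)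
        refine ⟨x, hxs, ?_⟩
        rw [hxv]
        have h1 : (i : ℕ) + (n - (i : ℕ) + r) = n + r := by omega
        rw [h1, Nat.add_mod_left, Nat.mod_eq_of_lt hr]
      have hsub : Finset.range n ⊆ s.image (fun x : Fin (2 * n) => (x : ℕ)) := by
        intro r hr
        rw [Finset.mem_range] at hr
        obtain ⟨x, hxs, hxv⟩ := hall r hr
        exact Finset.mem_image.mpr ⟨x, hxs, hxv⟩
      have h1 := Finset.card_le_card hsub
      have h2 := Finset.card_image_le (s := s) (f := fun x : Fin (2 * n) => (x : ℕ))
      rw [Finset.card_range] at h1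
      omega
    -- on s, σπ = π
    have heq : ∀ x ∈ s, (σ * π) x = π x := by
      intro x hx
      rw [Equiv.Perm.mul_apply]
      exact hσfix (π x) (hπge x (hge x hx))
    refine ⟨hcard, ?_, hge⟩
    calc s.image π = s.image (σ * π) := Finset.image_congr fun x hx => (heq x hx).symm
      _ = s := hinv
  · rintro ⟨hcard, hinv, hge⟩
    refine ⟨hcard, ?_⟩
    have heq : ∀ x ∈ s, (σ * π) x = π x := by
      intro x hx
      rw [Equiv.Perm.mul_apply]
      exact hσfix (π x) (hπge x (hge x hx))
    rw [Finset.image_congr fun x hx => heq x hx]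
    exact hinv

/-- Murnaghan–Nakayama evaluation in Theorem 3.5:
`χ^{(2n-k,k)}_{(n,λ)} = χ^{(n-k,k)}_λ` for `n ≥ 2k`, expressed as
`F k (σπ) - F (k-1) (σπ) = G k π - G (k-1) π`. -/
theorem mn_eval_2nkk (n k : ℕ) (hk : 1 ≤ k) (hn : 2 * k ≤ n)
    (σ π : Equiv.Perm (Fin (2 * n)))
    (hσ : ∀ i : Fin (2 * n),
      ((σ i : ℕ) = if (i : ℕ) < n then ((i : ℕ) + 1) % n else (i : ℕ)))
    (hπ : ∀ i : Fin (2 * n), (i : ℕ) < n → π i = i) :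
    (F k (σ * π) : ℤ) - (F (k - 1) (σ * π) : ℤ)
      = (G n k π : ℤ) - (G n (k - 1) π : ℤ) := by
  have hn0 : 0 < n := by omega
  rw [key_FG hn0 σ π hσ hπ k (by omega), key_FG hn0 σ π hσ hπ (k - 1) (by omega)]
end

section
/- (Equation (17): a single h-term when the hook can be removed.) Let k ≥ 1 and n ≥ 2k, and let h satisfy 1 < h < n, d_h := gcd(n,h) ≠ 1, and (n/d_h) ∣ k; set l_k = k·d_h/n. Let σ ∈ Equiv.Perm (Fin (2*n)) be the n-cycle with σ(i) = i+1 mod n for i < n and σ(i) = i for i ≥ n, and let P be the subgroup of Equiv.Perm (Fin (2*n)) consisting of all permutations π with π(i) = i for every i < n. Then Σ_{π ∈ P} (F k (σ^h * π) − F (k−1) (σ^h * π)) = C(d_h, l_k) · n!, where C(a,b) is the binomial coefficient. -/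
open Finset Equiv

open Finset Equiv

section Aux

variable (n : ℕ)

/-- elements of `Fin (2*n)` with value `< n`. -/
def lowS : Finset (Fin (2*n)) := Finset.univ.filter (fun i => (i:ℕ) < n)

/-- elements of `Fin (2*n)` with value `≥ n`. -/
def upS : Finset (Fin (2*n)) := Finset.univ.filter (fun i => ¬ (i:ℕ) < n)

lemma card_lowS : (lowS n).card = n := by
  classical
  rcases Nat.eq_zero_or_pos n with rfl | hn
  · have : IsEmpty (Fin (2*0)) := by simp; infer_instance
    exact Finset.card_eq_zero.mpr (Finset.eq_empty_of_isEmpty _)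
  conv_rhs => rw [← Finset.card_range n]
  refine Finset.card_nbij' (fun a => (a:ℕ))
    (fun b => (⟨b % (2*n), Nat.mod_lt _ (by omega)⟩ : Fin (2*n))) ?_ ?_ ?_ ?_
  · intro a ha
    simp [lowS] at ha ⊢; exact ha
  · intro b hb
    simp [Finset.mem_range] at hb
    simp [lowS, Nat.mod_eq_of_lt (by omega : b < 2*n)]
    omega
  · intro a _; ext; simp [Nat.mod_eq_of_lt a.isLt]
  · intro b hb; simp [Finset.mem_range] at hb
    simp [Nat.mod_eq_of_lt (by omega : b < 2*n)]

lemma card_upS : (upS n).card = n := by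
  classical
  have h1 : (lowS n).card + (upS n).card = 2*n := by
    rw [lowS, upS, Finset.card_filter_add_card_filter_not]
    simp
  have := card_lowS n
  omega

end Aux

section Sigma

variable {n : ℕ} (hn : 0 < n) (σ : Equiv.Perm (Fin (2*n)))
  (hσ : ∀ i : Fin (2 * n),
      ((σ i : ℕ) = if (i : ℕ) < n then ((i : ℕ) + 1) % n else (i : ℕ)))

include hn hσ

lemma sigma_pow_val (t : ℕ) (i : Fin (2*n)) :
    (((σ ^ t) i : Fin (2*n)) : ℕ) = if (i : ℕ) < n then ((i : ℕ) + t) % n else (i : ℕ) := by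
  induction t generalizing i with
  | zero =>
    simp only [pow_zero, Equiv.Perm.coe_one, id_eq, Nat.add_zero]
    split
    · exact (Nat.mod_eq_of_lt (by assumption)).symm
    · rfl
  | succ t ih =>
    rw [pow_succ, Equiv.Perm.mul_apply]
    by_cases hi : (i : ℕ) < n
    · have h1 : ((σ i : Fin (2*n)) : ℕ) = ((i : ℕ) + 1) % n := by rw [hσ i, if_pos hi]
      have h2 : ((σ i : Fin (2*n)) : ℕ) < n := by rw [h1]; exact Nat.mod_lt _ hn
      rw [ih (σ i), if_pos h2, h1, Nat.mod_add_mod, if_pos hi]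
      ring_nf
    · have h1 : σ i = i := by
        apply Fin.ext; rw [hσ i, if_neg hi]
      rw [h1, ih i, if_neg hi, if_neg hi]

lemma sigma_pow_fix (t : ℕ) (i : Fin (2*n)) (hi : ¬ (i : ℕ) < n) : (σ ^ t) i = i := by
  apply Fin.ext
  rw [sigma_pow_val hn σ hσ t i, if_neg hi]

lemma sigma_pow_low (t : ℕ) (i : Fin (2*n)) (hi : (i : ℕ) < n) :
    (((σ ^ t) i : Fin (2*n)) : ℕ) < n := by
  rw [sigma_pow_val hn σ hσ t i, if_pos hi]
  exact Nat.mod_lt _ hn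

end Sigma

lemma pi_upper {n : ℕ} (π : Equiv.Perm (Fin (2*n)))
    (hπ : ∀ i : Fin (2*n), (i : ℕ) < n → π i = i) (i : Fin (2*n)) (hi : ¬ (i : ℕ) < n) :
    ¬ ((π i : Fin (2*n)) : ℕ) < n := by
  intro hlt
  have h1 : π (π i) = π i := hπ (π i) hlt
  have h2 : π i = i := π.injective h1
  rw [h2] at hlt
  exact hi hlt

section Stab

variable {α : Type*} [DecidableEq α]

lemma perm_fix_of_not_mem {f : Equiv.Perm α} {B : Finset α}
    (hf : ∀ {x : α}, f x ≠ x → x ∈ B) {x : α} (hx : x ∉ B) : f x = x := by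
  by_contra hne
  exact hx (hf hne)

lemma perm_mem_of_mem {f : Equiv.Perm α} {B : Finset α}
    (hf : ∀ {x : α}, f x ≠ x → x ∈ B) {x : α} (hx : x ∈ B) : f x ∈ B := by
  by_contra hne
  have h1 : f (f x) = f x := perm_fix_of_not_mem hf hne
  have h2 : f x = x := f.injective h1
  rw [h2] at hne
  exact hne hx

lemma mem_of_image_eq {π : Equiv.Perm α} {B : Finset α} (h : B.image π = B) (x : α) :
    π x ∈ B ↔ x ∈ B := by
  constructor
  · intro hx
    rw [← h] at hx
    rcases Finset.mem_image.mp hx with ⟨y, hy, hyx⟩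
    rwa [← π.injective hyx]
  · intro hx
    rw [← h]
    exact Finset.mem_image_of_mem _ hx

lemma image_eq_of_maps_to {π : Equiv.Perm α} {B : Finset α} (h : ∀ x ∈ B, π x ∈ B) :
    B.image π = B := by
  apply Finset.eq_of_subset_of_card_le
  · intro y hy
    rcases Finset.mem_image.mp hy with ⟨x, hx, rfl⟩
    exact h x hx
  · rw [Finset.card_image_of_injective _ π.injective]

lemma stab_card {n : ℕ} (B : Finset (Fin (2*n))) (hB : B ⊆ upS n) :
    ((Finset.univ : Finset (Equiv.Perm (Fin (2*n)))).filter
      (fun π : Equiv.Perm (Fin (2*n)) =>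
        (∀ i : Fin (2*n), (i : ℕ) < n → π i = i) ∧ B.image ⇑π = B)).card
      = Nat.factorial B.card * Nat.factorial (n - B.card) := by
  classical
  have hBup : ∀ x ∈ B, ¬ (x : ℕ) < n := by
    intro x hx
    have := hB hx
    simpa [upS] using this
  have key : ((permsOfFinset B) ×ˢ (permsOfFinset (upS n \ B))).card =
      ((Finset.univ : Finset (Equiv.Perm (Fin (2*n)))).filter
      (fun π : Equiv.Perm (Fin (2*n)) =>
        (∀ i : Fin (2*n), (i : ℕ) < n → π i = i) ∧ B.image ⇑π = B)).card := by
    refine Finset.card_bij' (fun p _ => p.1 * p.2)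
      (fun π hπ =>
        (Equiv.Perm.ofSubtype (π.subtypePerm (p := fun x => x ∈ B)
          (fun x => (mem_of_image_eq (Finset.mem_filter.mp hπ).2.2 x))),
         Equiv.Perm.ofSubtype (π.subtypePerm (p := fun x => x ∉ B)
          (fun x => not_iff_not.mpr (mem_of_image_eq (Finset.mem_filter.mp hπ).2.2 x)))))
      ?hi ?hj ?li ?ri
    case hi =>
      rintro ⟨f, g⟩ hp
      rw [Finset.mem_product] at hp
      have hf : ∀ {x : Fin (2*n)}, f x ≠ x → x ∈ B := mem_perms_of_finset_iff.mp hp.1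
      have hg : ∀ {x : Fin (2*n)}, g x ≠ x → x ∈ upS n \ B := mem_perms_of_finset_iff.mp hp.2
      rw [Finset.mem_filter]
      refine ⟨Finset.mem_univ _, ?_, ?_⟩
      · intro i hi
        have hiB : i ∉ B := fun hmem => hBup i hmem hi
        have hiU : i ∉ upS n \ B := by
          intro hmem
          have := (Finset.mem_sdiff.mp hmem).1
          simp [upS] at this
          omega
        simp only [Equiv.Perm.mul_apply]
        rw [perm_fix_of_not_mem hg hiU, perm_fix_of_not_mem hf hiB]
      · apply image_eq_of_maps_to
        intro x hx
        have hxU : x ∉ upS n \ B := by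
          intro hmem
          exact (Finset.mem_sdiff.mp hmem).2 hx
        simp only [Equiv.Perm.mul_apply]
        rw [perm_fix_of_not_mem hg hxU]
        exact perm_mem_of_mem hf hx
    case hj =>
      intro π hπ
      obtain ⟨-, hfix, himg⟩ := Finset.mem_filter.mp hπ
      rw [Finset.mem_product]
      constructor
      · rw [mem_perms_of_finset_iff]
        intro x hx
        by_contra hxB
        rw [Equiv.Perm.ofSubtype_apply_of_not_mem (p := fun x => x ∈ B) _ hxB] at hx
        exact hx rfl
      · rw [mem_perms_of_finset_iff]
        intro x hx
        by_cases hxB : x ∈ B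
        · rw [Equiv.Perm.ofSubtype_apply_of_not_mem (p := fun x => x ∉ B) _
            (not_not_intro hxB)] at hx
          exact absurd rfl hx
        · rw [Equiv.Perm.ofSubtype_apply_of_mem (p := fun x => x ∉ B) _ hxB] at hx
          simp only [Equiv.Perm.subtypePerm_apply] at hx
          have hxn : ¬ (x : ℕ) < n := by
            intro hlt
            exact hx (by rw [hfix x hlt])
          rw [Finset.mem_sdiff]
          exact ⟨by simp only [upS, Finset.mem_filter]; exact ⟨Finset.mem_univ _, hxn⟩, hxB⟩
    case li =>
      rintro ⟨f, g⟩ hp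
      rw [Finset.mem_product] at hp
      have hf : ∀ {x : Fin (2*n)}, f x ≠ x → x ∈ B := mem_perms_of_finset_iff.mp hp.1
      have hg : ∀ {x : Fin (2*n)}, g x ≠ x → x ∈ upS n \ B := mem_perms_of_finset_iff.mp hp.2
      have hgB : ∀ x ∈ B, g x = x := by
        intro x hx
        apply perm_fix_of_not_mem hg
        intro hmem
        exact (Finset.mem_sdiff.mp hmem).2 hx
      apply Prod.ext
      · apply Equiv.ext
        intro x
        by_cases hxB : x ∈ B
        · rw [Equiv.Perm.ofSubtype_apply_of_mem (p := fun x => x ∈ B) _ hxB]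
          simp only [Equiv.Perm.subtypePerm_apply, Equiv.Perm.mul_apply]
          rw [hgB x hxB]
        · rw [Equiv.Perm.ofSubtype_apply_of_not_mem (p := fun x => x ∈ B) _ hxB]
          exact (perm_fix_of_not_mem hf hxB).symm
      · apply Equiv.ext
        intro x
        by_cases hxB : x ∈ B
        · rw [Equiv.Perm.ofSubtype_apply_of_not_mem (p := fun x => x ∉ B) _
            (not_not_intro hxB)]
          exact (hgB x hxB).symm
        · rw [Equiv.Perm.ofSubtype_apply_of_mem (p := fun x => x ∉ B) _ hxB]
          simp only [Equiv.Perm.subtypePerm_apply, Equiv.Perm.mul_apply]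
          by_cases hgx : g x = x
          · rw [hgx, perm_fix_of_not_mem hf hxB]
          · have hxU : x ∈ upS n \ B := hg hgx
            have hgxU : g x ∈ upS n \ B := perm_mem_of_mem hg hxU
            rw [perm_fix_of_not_mem hf (Finset.mem_sdiff.mp hgxU).2]
    case ri =>
      intro π hπ
      obtain ⟨-, hfix, himg⟩ := Finset.mem_filter.mp hπ
      apply Equiv.ext
      intro x
      simp only [Equiv.Perm.mul_apply]
      by_cases hxB : x ∈ B
      · rw [Equiv.Perm.ofSubtype_apply_of_not_mem (p := fun x => x ∉ B) _
          (not_not_intro hxB),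
          Equiv.Perm.ofSubtype_apply_of_mem (p := fun x => x ∈ B) _ hxB]
        simp
      · rw [Equiv.Perm.ofSubtype_apply_of_mem (p := fun x => x ∉ B) _ hxB]
        simp only [Equiv.Perm.subtypePerm_apply]
        have hpxB : π x ∉ B := fun hmem => hxB ((mem_of_image_eq himg x).mp hmem)
        rw [Equiv.Perm.ofSubtype_apply_of_not_mem (p := fun x => x ∈ B) _ hpxB]
  rw [← key, Finset.card_product, card_perms_of_finset, card_perms_of_finset,
    Finset.card_sdiff_of_subset hB, card_upS]

end Stab

lemma sum_stab {n : ℕ} (t : ℕ) (ht : t ≤ n) :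
    ∑ B ∈ Finset.powersetCard t (upS n),
      ((Finset.univ : Finset (Equiv.Perm (Fin (2*n)))).filter
        (fun π : Equiv.Perm (Fin (2*n)) =>
          (∀ i : Fin (2*n), (i : ℕ) < n → π i = i) ∧ B.image ⇑π = B)).card
      = n.factorial := by
  classical
  have h1 : ∀ B ∈ Finset.powersetCard t (upS n),
      ((Finset.univ : Finset (Equiv.Perm (Fin (2*n)))).filter
        (fun π : Equiv.Perm (Fin (2*n)) =>
          (∀ i : Fin (2*n), (i : ℕ) < n → π i = i) ∧ B.image ⇑π = B)).card
      = Nat.factorial t * Nat.factorial (n - t) := by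
    intro B hB
    obtain ⟨hBsub, hBcard⟩ := Finset.mem_powersetCard.mp hB
    rw [stab_card B hBsub, hBcard]
  rw [Finset.sum_congr rfl h1, Finset.sum_const, Finset.card_powersetCard, card_upS,
    smul_eq_mul, ← Nat.choose_mul_factorial_mul_factorial ht, mul_assoc]

section Decomp

variable {n : ℕ} (hn : 0 < n) (σ : Equiv.Perm (Fin (2*n)))
  (hσ : ∀ i : Fin (2 * n),
      ((σ i : ℕ) = if (i : ℕ) < n then ((i : ℕ) + 1) % n else (i : ℕ)))

include hn hσ

lemma inv_decomp (t : ℕ) (π : Equiv.Perm (Fin (2*n)))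
    (hπ : ∀ i : Fin (2*n), (i : ℕ) < n → π i = i) (s : Finset (Fin (2*n))) :
    s.image ⇑(σ ^ t * π) = s ↔
      ((s.filter (fun i : Fin (2*n) => (i : ℕ) < n)).image ⇑(σ ^ t) = s.filter (fun i : Fin (2*n) => (i : ℕ) < n) ∧
       (s.filter (fun i : Fin (2*n) => ¬ (i : ℕ) < n)).image ⇑π = s.filter (fun i : Fin (2*n) => ¬ (i : ℕ) < n)) := by
  classical
  set τ : Equiv.Perm (Fin (2*n)) := σ ^ t * π with hτ
  have hτlow : ∀ i : Fin (2*n), (i : ℕ) < n → τ i = (σ ^ t) i := by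
    intro i hi
    simp only [hτ, Equiv.Perm.mul_apply, hπ i hi]
  have hτup : ∀ i : Fin (2*n), ¬ (i : ℕ) < n → τ i = π i := by
    intro i hi
    simp only [hτ, Equiv.Perm.mul_apply]
    exact sigma_pow_fix hn σ hσ t (π i) (pi_upper π hπ i hi)
  have hpres : ∀ i : Fin (2*n), ((τ i : ℕ) < n ↔ (i : ℕ) < n) := by
    intro i
    by_cases hi : (i : ℕ) < n
    · rw [hτlow i hi]
      simp only [hi, iff_true]
      exact sigma_pow_low hn σ hσ t i hi
    · rw [hτup i hi]
      simp only [hi, iff_false]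
      exact pi_upper π hπ i hi
  constructor
  · intro h
    constructor
    · have e1 : (s.filter (fun i : Fin (2*n) => (i : ℕ) < n)).image ⇑(σ ^ t) =
          (s.filter (fun i : Fin (2*n) => (i : ℕ) < n)).image ⇑τ :=
        Finset.image_congr (fun x hx => (hτlow x (Finset.mem_filter.mp hx).2).symm)
      have e2 : s.filter (fun i : Fin (2*n) => (i : ℕ) < n) = s.filter (fun i => (τ i : ℕ) < n) :=
        Finset.filter_congr (fun x _ => (hpres x).symm)
      rw [e1]
      conv_lhs => rw [e2]
      have e3 := Finset.filter_image (s := s) (f := ⇑τ)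
        (p := fun i : Fin (2*n) => (i : ℕ) < n)
      rw [← e3, h]
    · have e1 : (s.filter (fun i : Fin (2*n) => ¬ (i : ℕ) < n)).image ⇑π =
          (s.filter (fun i : Fin (2*n) => ¬ (i : ℕ) < n)).image ⇑τ :=
        Finset.image_congr (fun x hx => (hτup x (Finset.mem_filter.mp hx).2).symm)
      have e2 : s.filter (fun i : Fin (2*n) => ¬ (i : ℕ) < n) = s.filter (fun i => ¬ (τ i : ℕ) < n) :=
        Finset.filter_congr (fun x _ => by rw [hpres x])
      rw [e1]
      conv_lhs => rw [e2]
      have e3 := Finset.filter_image (s := s) (f := ⇑τ)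
        (p := fun i : Fin (2*n) => ¬ (i : ℕ) < n)
      rw [← e3, h]
  · rintro ⟨hA, hB⟩
    have e1 : (s.filter (fun i : Fin (2*n) => (i : ℕ) < n)).image ⇑τ =
        (s.filter (fun i : Fin (2*n) => (i : ℕ) < n)).image ⇑(σ ^ t) :=
      Finset.image_congr (fun x hx => hτlow x (Finset.mem_filter.mp hx).2)
    have e2 : (s.filter (fun i : Fin (2*n) => ¬ (i : ℕ) < n)).image ⇑τ =
        (s.filter (fun i : Fin (2*n) => ¬ (i : ℕ) < n)).image ⇑π :=
      Finset.image_congr (fun x hx => hτup x (Finset.mem_filter.mp hx).2)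
    conv_lhs => rw [← Finset.filter_union_filter_not_eq (p := fun i : Fin (2*n) => (i : ℕ) < n) s]
    rw [Finset.image_union, e1, e2, hA, hB,
      Finset.filter_union_filter_not_eq]

end Decomp

section Main

variable {n : ℕ} (hn : 0 < n) (σ : Equiv.Perm (Fin (2*n)))
  (hσ : ∀ i : Fin (2 * n),
      ((σ i : ℕ) = if (i : ℕ) < n then ((i : ℕ) + 1) % n else (i : ℕ)))

include hn hσ

lemma main_count (t j : ℕ) (hj : j ≤ n) :
    ∑ π ∈ (Finset.univ : Finset (Equiv.Perm (Fin (2 * n)))).filter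
        (fun π => ∀ i : Fin (2 * n), (i : ℕ) < n → π i = i),
      F j (σ ^ t * π)
    = n.factorial *
      ((lowS n).powerset.filter
        (fun A => A.image ⇑(σ ^ t) = A ∧ A.card ≤ j)).card := by
  classical
  set low : Fin (2*n) → Prop := fun i => (i : ℕ) < n with hlowdef
  -- Step 1: rewrite each F via the decomposition
  have step1 : ∀ π ∈ (Finset.univ : Finset (Equiv.Perm (Fin (2 * n)))).filter
        (fun π => ∀ i : Fin (2 * n), (i : ℕ) < n → π i = i),
      F j (σ ^ t * π) =
      ∑ s ∈ (Finset.univ : Finset (Finset (Fin (2*n)))),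
        (if (s.filter low).image ⇑(σ ^ t) = s.filter low ∧
            (s.filter low).card + (s.filter (fun i => ¬ low i)).card = j ∧
            (s.filter (fun i => ¬ low i)).image ⇑π = s.filter (fun i => ¬ low i)
         then 1 else 0) := by
    intro π hπ
    have hπ' := (Finset.mem_filter.mp hπ).2
    rw [F, Finset.card_filter]
    apply Finset.sum_congr rfl
    intro s _
    congr 1
    · simp only [eq_iff_iff]
      rw [inv_decomp hn σ hσ t π hπ' s]
      have hc : s.card = (s.filter low).card + (s.filter (fun i => ¬ low i)).card :=
        (Finset.card_filter_add_card_filter_not (p := low) (s := s)).symm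
      constructor
      · rintro ⟨hcard, hA, hB⟩
        exact ⟨hA, by omega, hB⟩
      · rintro ⟨hA, hcard, hB⟩
        exact ⟨by omega, hA, hB⟩
  rw [Finset.sum_congr rfl step1]
  rw [Finset.sum_comm]
  -- Step 2: inner sum over π
  have step2 : ∀ s : Finset (Fin (2*n)),
      (∑ π ∈ (Finset.univ : Finset (Equiv.Perm (Fin (2 * n)))).filter
        (fun π => ∀ i : Fin (2 * n), (i : ℕ) < n → π i = i),
        (if (s.filter low).image ⇑(σ ^ t) = s.filter low ∧
            (s.filter low).card + (s.filter (fun i => ¬ low i)).card = j ∧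
            (s.filter (fun i => ¬ low i)).image ⇑π = s.filter (fun i => ¬ low i)
         then 1 else 0))
      = (if (s.filter low).image ⇑(σ ^ t) = s.filter low ∧
            (s.filter low).card + (s.filter (fun i => ¬ low i)).card = j
         then ((Finset.univ : Finset (Equiv.Perm (Fin (2*n)))).filter
            (fun π : Equiv.Perm (Fin (2*n)) =>
              (∀ i : Fin (2*n), (i : ℕ) < n → π i = i) ∧
              (s.filter (fun i => ¬ low i)).image ⇑π = s.filter (fun i => ¬ low i))).card
         else 0) := by
    intro s
    by_cases hC : (s.filter low).image ⇑(σ ^ t) = s.filter low ∧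
        (s.filter low).card + (s.filter (fun i => ¬ low i)).card = j
    · rw [if_pos hC]
      rw [Finset.card_filter (fun π : Equiv.Perm (Fin (2*n)) =>
              (∀ i : Fin (2*n), (i : ℕ) < n → π i = i) ∧
              (s.filter (fun i => ¬ low i)).image ⇑π = s.filter (fun i => ¬ low i))
            Finset.univ]
      rw [Finset.sum_filter]
      apply Finset.sum_congr rfl
      intro π _
      by_cases hπ : ∀ i : Fin (2 * n), (i : ℕ) < n → π i = i
      · rw [if_pos hπ]
        by_cases hBim : (s.filter (fun i => ¬ low i)).image ⇑π = s.filter (fun i => ¬ low i)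
        · rw [if_pos ⟨hC.1, hC.2, hBim⟩, if_pos ⟨hπ, hBim⟩]
        · rw [if_neg (fun hcon => hBim hcon.2.2), if_neg (fun hcon => hBim hcon.2)]
      · rw [if_neg hπ, if_neg (fun hcon => hπ hcon.1)]
    · rw [if_neg hC]
      apply Finset.sum_eq_zero
      intro π _
      rw [if_neg]
      intro hcon
      exact hC ⟨hcon.1, hcon.2.1⟩
  rw [Finset.sum_congr rfl (fun s _ => step2 s)]
  -- Step 3: reindex over pairs (A, B)
  have step3 :
      (∑ s ∈ (Finset.univ : Finset (Finset (Fin (2*n)))),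
        (if (s.filter low).image ⇑(σ ^ t) = s.filter low ∧
            (s.filter low).card + (s.filter (fun i => ¬ low i)).card = j
         then ((Finset.univ : Finset (Equiv.Perm (Fin (2*n)))).filter
            (fun π : Equiv.Perm (Fin (2*n)) =>
              (∀ i : Fin (2*n), (i : ℕ) < n → π i = i) ∧
              (s.filter (fun i => ¬ low i)).image ⇑π = s.filter (fun i => ¬ low i))).card
         else 0))
      = ∑ p ∈ (lowS n).powerset ×ˢ (upS n).powerset,
        (if p.1.image ⇑(σ ^ t) = p.1 ∧ p.1.card + p.2.card = j
         then ((Finset.univ : Finset (Equiv.Perm (Fin (2*n)))).filter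
            (fun π : Equiv.Perm (Fin (2*n)) =>
              (∀ i : Fin (2*n), (i : ℕ) < n → π i = i) ∧
              p.2.image ⇑π = p.2)).card
         else 0) := by
    apply Finset.sum_nbij' (fun s => (s.filter low, s.filter (fun i => ¬ low i)))
      (fun p => p.1 ∪ p.2)
    · intro s _
      rw [Finset.mem_product]
      constructor
      · rw [Finset.mem_powerset]
        intro x hx
        simp only [lowS, Finset.mem_filter]
        exact ⟨Finset.mem_univ _, (Finset.mem_filter.mp hx).2⟩
      · rw [Finset.mem_powerset]
        intro x hx
        simp only [upS, Finset.mem_filter]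
        exact ⟨Finset.mem_univ _, (Finset.mem_filter.mp hx).2⟩
    · intro p _
      exact Finset.mem_univ _
    · intro s _
      exact Finset.filter_union_filter_not_eq (p := low) s
    · rintro ⟨A, B⟩ hp
      rw [Finset.mem_product, Finset.mem_powerset, Finset.mem_powerset] at hp
      have hAl : ∀ x ∈ A, low x := by
        intro x hx
        have := hp.1 hx
        simp only [lowS, Finset.mem_filter] at this
        exact this.2
      have hBl : ∀ x ∈ B, ¬ low x := by
        intro x hx
        have := hp.2 hx
        simp only [upS, Finset.mem_filter] at this
        exact this.2
      have h1 : (A ∪ B).filter low = A := by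
        rw [Finset.filter_union, Finset.filter_true_of_mem hAl,
          Finset.filter_false_of_mem (fun x hx => fun hc => hBl x hx hc),
          Finset.union_empty]
      have h2 : (A ∪ B).filter (fun i => ¬ low i) = B := by
        rw [Finset.filter_union,
          Finset.filter_false_of_mem (fun x hx => not_not_intro (hAl x hx)),
          Finset.filter_true_of_mem hBl, Finset.empty_union]
      simp only [Prod.mk.injEq]
      exact ⟨h1, h2⟩
    · intro s _
      rfl
  rw [step3, Finset.sum_product]
  -- Step 4: inner sum over B
  have step4 : ∀ A ∈ (lowS n).powerset,
      (∑ B ∈ (upS n).powerset,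
        (if A.image ⇑(σ ^ t) = A ∧ A.card + B.card = j
         then ((Finset.univ : Finset (Equiv.Perm (Fin (2*n)))).filter
            (fun π : Equiv.Perm (Fin (2*n)) =>
              (∀ i : Fin (2*n), (i : ℕ) < n → π i = i) ∧
              B.image ⇑π = B)).card
         else 0))
      = (if A.image ⇑(σ ^ t) = A ∧ A.card ≤ j then n.factorial else 0) := by
    intro A hA
    by_cases hAinv : A.image ⇑(σ ^ t) = A
    · by_cases hAj : A.card ≤ j
      · rw [if_pos ⟨hAinv, hAj⟩]
        have he : ∀ B ∈ (upS n).powerset,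
            (if A.image ⇑(σ ^ t) = A ∧ A.card + B.card = j
             then ((Finset.univ : Finset (Equiv.Perm (Fin (2*n)))).filter
                (fun π : Equiv.Perm (Fin (2*n)) =>
                  (∀ i : Fin (2*n), (i : ℕ) < n → π i = i) ∧
                  B.image ⇑π = B)).card
             else 0)
            = (if B.card = j - A.card
               then ((Finset.univ : Finset (Equiv.Perm (Fin (2*n)))).filter
                  (fun π : Equiv.Perm (Fin (2*n)) =>
                    (∀ i : Fin (2*n), (i : ℕ) < n → π i = i) ∧
                    B.image ⇑π = B)).card
               else 0) := by
          intro B _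
          congr 1
          simp only [eq_iff_iff]
          constructor
          · rintro ⟨-, hc⟩; omega
          · intro hc; exact ⟨hAinv, by omega⟩
        rw [Finset.sum_congr rfl he, ← Finset.sum_filter,
          ← Finset.powersetCard_eq_filter]
        exact sum_stab (j - A.card) (by omega)
      · rw [if_neg (by tauto)]
        apply Finset.sum_eq_zero
        intro B _
        rw [if_neg]
        rintro ⟨-, hc⟩
        omega
    · rw [if_neg (by tauto)]
      apply Finset.sum_eq_zero
      intro B _
      rw [if_neg (by tauto)]
  rw [Finset.sum_congr rfl step4, ← Finset.sum_filter, Finset.sum_const, smul_eq_mul,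
    mul_comm]

end Main

lemma exists_mul_mod (n h c : ℕ) (hn : 0 < n) (hdvd : Nat.gcd n h ∣ c) :
    ∃ t : ℕ, (h * t) % n = c % n := by
  have hbez : (Nat.gcd n h : ℤ) = n * Nat.gcdA n h + h * Nat.gcdB n h := Nat.gcd_eq_gcd_ab n h
  obtain ⟨e, he⟩ := hdvd
  set z : ℤ := Nat.gcdB n h * e with hzdef
  have hmod : (h : ℤ) * z ≡ (c : ℤ) [ZMOD (n : ℤ)] := by
    rw [Int.modEq_iff_dvd]
    refine ⟨Nat.gcdA n h * e, ?_⟩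
    have : (c : ℤ) = (Nat.gcd n h : ℤ) * e := by exact_mod_cast he
    rw [this, hbez, hzdef]
    ring
  have hn' : (n : ℤ) ≠ 0 := by exact_mod_cast hn.ne'
  refine ⟨(z % n).toNat, ?_⟩
  have ht : ((z % n).toNat : ℤ) = z % n := Int.toNat_of_nonneg (Int.emod_nonneg z hn')
  have h2 : (h : ℤ) * ((z % n).toNat : ℤ) ≡ (h : ℤ) * z [ZMOD (n : ℤ)] := by
    apply Int.ModEq.mul_left
    rw [ht]
    exact Int.emod_emod_of_dvd z dvd_rfl
  have h3 : (h : ℤ) * ((z % n).toNat : ℤ) ≡ (c : ℤ) [ZMOD (n : ℤ)] := h2.trans hmod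
  have h4 : ((h * (z % n).toNat : ℕ) : ℤ) % (n : ℤ) = ((c : ℕ) : ℤ) % (n : ℤ) := by
    push_cast
    exact h3
  have h5 : (((h * (z % n).toNat) % n : ℕ) : ℤ) = ((c % n : ℕ) : ℤ) := by
    push_cast
    exact h4
  exact_mod_cast h5

lemma fiber_card {n : ℕ} (d q c : ℕ) (hdq : n = d * q) (hc : c < d) :
    ((lowS n).filter (fun x : Fin (2*n) => (x : ℕ) % d = c)).card = q := by
  classical
  conv_rhs => rw [← Finset.card_range q]
  refine Finset.card_bij' (fun x _ => (x : ℕ) / d)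
    (fun b hb => (⟨c + d * b, by
      have hb' : b < q := Finset.mem_range.mp hb
      have : c + d * b < d * q := by
        calc c + d * b < d + d * b := by omega
        _ = d * (b + 1) := by ring
        _ ≤ d * q := Nat.mul_le_mul_left d (by omega)
      omega⟩ : Fin (2*n))) ?_ ?_ ?_ ?_
  · intro x hx
    rw [Finset.mem_filter] at hx
    obtain ⟨hxl, hxc⟩ := hx
    have hxn : (x : ℕ) < n := by
      simpa [lowS] using hxl
    rw [Finset.mem_range]
    have hd0 : 0 < d := by omega
    rw [Nat.div_lt_iff_lt_mul hd0, Nat.mul_comm q d]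
    omega
  · intro b hb
    have hb' : b < q := Finset.mem_range.mp hb
    rw [Finset.mem_filter]
    constructor
    · simp only [lowS, Finset.mem_filter]
      refine ⟨Finset.mem_univ _, ?_⟩
      show c + d * b < n
      calc c + d * b < d + d * b := by omega
      _ = d * (b + 1) := by ring
      _ ≤ d * q := Nat.mul_le_mul_left d (by omega)
      _ = n := hdq.symm
    · show ((c + d * b) % d) = c
      rw [Nat.add_mul_mod_self_left, Nat.mod_eq_of_lt hc]
  · intro x hx
    rw [Finset.mem_filter] at hx
    apply Fin.ext
    show c + d * ((x : ℕ) / d) = (x : ℕ)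
    conv_rhs => rw [← Nat.mod_add_div (x : ℕ) d]
    rw [hx.2]
  · intro b hb
    show (c + d * b) / d = b
    have hd0 : 0 < d := by omega
    rw [Nat.add_mul_div_left _ _ hd0, Nat.div_eq_of_lt hc]
    omega

section Inv

variable {n : ℕ} (hn : 0 < n) (σ : Equiv.Perm (Fin (2*n)))
  (hσ : ∀ i : Fin (2 * n),
      ((σ i : ℕ) = if (i : ℕ) < n then ((i : ℕ) + 1) % n else (i : ℕ)))

include hn hσ

lemma inv_char (h : ℕ) (hh : 0 < h) (A : Finset (Fin (2*n))) (hA : A ⊆ lowS n) :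
    A.image ⇑(σ ^ h) = A ↔
      ∀ x ∈ A, ∀ y : Fin (2*n), (y : ℕ) < n →
        (y : ℕ) % Nat.gcd n h = (x : ℕ) % Nat.gcd n h → y ∈ A := by
  classical
  have hAlow : ∀ x ∈ A, (x : ℕ) < n := by
    intro x hx
    have := hA hx
    simpa [lowS] using this
  constructor
  · intro him x hx y hy hyd
    have hiter : ∀ m : ℕ, A.image ⇑((σ ^ h) ^ m) = A := by
      intro m
      induction m with
      | zero => simp
      | succ m ih =>
        rw [pow_succ', Equiv.Perm.coe_mul, ← Finset.image_image, ih, him]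
    set c : ℕ := (y : ℕ) + n - (x : ℕ) with hcdef
    have hxy : (x : ℕ) ≤ (y : ℕ) + n := by
      have := hAlow x hx
      omega
    have hdc : Nat.gcd n h ∣ c := by
      have h1 : (x : ℕ) ≡ (y : ℕ) + n [MOD Nat.gcd n h] := by
        have h2 : ((y : ℕ) + n) % Nat.gcd n h = (y : ℕ) % Nat.gcd n h := by
          have h3 : n % Nat.gcd n h = 0 := Nat.mod_eq_zero_of_dvd (Nat.gcd_dvd_left n h)
          rw [Nat.add_mod, h3, Nat.add_zero, Nat.mod_mod_of_dvd _ dvd_rfl]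
        unfold Nat.ModEq
        rw [h2, hyd]
      exact (Nat.modEq_iff_dvd' hxy).mp h1
    obtain ⟨t, ht⟩ := exists_mul_mod n h c hn hdc
    have hmem : ((σ ^ h) ^ t) x ∈ A := by
      rw [← hiter t]
      exact Finset.mem_image_of_mem _ hx
    have hval : (((σ ^ h) ^ t) x : ℕ) = (y : ℕ) := by
      rw [← pow_mul]
      rw [sigma_pow_val hn σ hσ (h * t) x, if_pos (hAlow x hx)]
      have e1 : ((x : ℕ) + h * t) % n = ((x : ℕ) + c) % n := by
        conv_lhs => rw [Nat.add_mod, ht, ← Nat.add_mod]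
      rw [e1]
      have e2 : (x : ℕ) + c = (y : ℕ) + n := by omega
      rw [e2, Nat.add_mod_right, Nat.mod_eq_of_lt hy]
    have : ((σ ^ h) ^ t) x = y := Fin.ext hval
    rwa [this] at hmem
  · intro hcl
    apply image_eq_of_maps_to
    intro x hx
    have hxn : (x : ℕ) < n := hAlow x hx
    have hvn : ((σ ^ h) x : ℕ) = ((x : ℕ) + h) % n := by
      rw [sigma_pow_val hn σ hσ h x, if_pos hxn]
    have hlt : ((σ ^ h) x : ℕ) < n := by
      rw [hvn]; exact Nat.mod_lt _ hn
    apply hcl x hx _ hlt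
    rw [hvn]
    have hdn : Nat.gcd n h ∣ n := Nat.gcd_dvd_left n h
    have hdh : Nat.gcd n h ∣ h := Nat.gcd_dvd_right n h
    rw [Nat.mod_mod_of_dvd _ hdn]
    have h3 : h % Nat.gcd n h = 0 := Nat.mod_eq_zero_of_dvd (Nat.gcd_dvd_right n h)
    rw [Nat.add_mod, h3, Nat.add_zero, Nat.mod_mod_of_dvd _ dvd_rfl]

lemma ninv_card (h k : ℕ) (hh : 0 < h) (hdiv : (n / Nat.gcd n h) ∣ k) :
    ((lowS n).powerset.filter
      (fun A => A.image ⇑(σ ^ h) = A ∧ A.card = k)).card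
    = (Nat.gcd n h).choose (k * Nat.gcd n h / n) := by
  classical
  set d := Nat.gcd n h with hddef
  have hd0 : 0 < d := Nat.gcd_pos_of_pos_left h hn
  have hdn : d ∣ n := Nat.gcd_dvd_left n h
  set q := n / d with hqdef
  have hnq : n = d * q := by
    rw [hqdef]
    exact (Nat.mul_div_cancel' hdn).symm
  have hq0 : 0 < q := by
    rcases Nat.eq_zero_or_pos q with h0 | h0
    · rw [h0, Nat.mul_zero] at hnq; omega
    · exact h0
  obtain ⟨e, he⟩ := hdiv
  have hke : k = q * e := he
  have hl : k * d / n = e := by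
    rw [hke]
    have : q * e * d = n * e := by rw [hnq]; ring
    rw [this, Nat.mul_div_cancel_left e hn]
  rw [hl]
  have htarget : (Nat.gcd n h).choose e
      = (Finset.powersetCard e (Finset.range d)).card := by
    rw [Finset.card_powersetCard, Finset.card_range]
  rw [htarget]
  -- the fiber of residues
  have hfib : ∀ (T : Finset ℕ), T ⊆ Finset.range d → ∀ c ∈ T,
      (((lowS n).filter (fun x : Fin (2*n) => (x : ℕ) % d ∈ T)).filter
        (fun x : Fin (2*n) => (x : ℕ) % d = c)).card = q := by
    intro T hT c hc
    have hcd : c < d := Finset.mem_range.mp (hT hc)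
    have : ((lowS n).filter (fun x : Fin (2*n) => (x : ℕ) % d ∈ T)).filter
        (fun x : Fin (2*n) => (x : ℕ) % d = c)
        = (lowS n).filter (fun x : Fin (2*n) => (x : ℕ) % d = c) := by
      rw [Finset.filter_filter]
      apply Finset.filter_congr
      intro x _
      constructor
      · rintro ⟨-, h2⟩; exact h2
      · intro h2; exact ⟨by rw [h2]; exact hc, h2⟩
    rw [this]
    exact fiber_card d q c hnq hcd
  have hcardT : ∀ (T : Finset ℕ), T ⊆ Finset.range d →
      ((lowS n).filter (fun x : Fin (2*n) => (x : ℕ) % d ∈ T)).card = T.card * q := by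
    intro T hT
    rw [Finset.card_eq_sum_card_fiberwise
      (f := fun x : Fin (2*n) => (x : ℕ) % d) (s := (lowS n).filter (fun x : Fin (2*n) => (x : ℕ) % d ∈ T)) (t := T)
      (fun x hx => (Finset.mem_filter.mp hx).2)]
    rw [Finset.sum_congr rfl (fun c hc => hfib T hT c hc), Finset.sum_const, smul_eq_mul]
  refine Finset.card_bij' (fun A _ => A.image (fun x : Fin (2*n) => (x : ℕ) % d))
    (fun T _ => (lowS n).filter (fun x : Fin (2*n) => (x : ℕ) % d ∈ T)) ?_ ?_ ?_ ?_
  · -- forward maps into powersetCard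
    intro A hA
    rw [Finset.mem_filter, Finset.mem_powerset] at hA
    obtain ⟨hAsub, hAinv, hAcard⟩ := hA
    have hchar := (inv_char hn σ hσ h hh A hAsub).mp hAinv
    have hAlow : ∀ x ∈ A, (x : ℕ) < n := by
      intro x hx
      have := hAsub hx
      simpa [lowS] using this
    rw [Finset.mem_powersetCard]
    have hTsub : A.image (fun x : Fin (2*n) => (x : ℕ) % d) ⊆ Finset.range d := by
      intro c hcmem
      rcases Finset.mem_image.mp hcmem with ⟨x, hx, rfl⟩
      exact Finset.mem_range.mpr (Nat.mod_lt _ hd0)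
    refine ⟨hTsub, ?_⟩
    -- A = filter of its residues, so k = |T| * q
    have hAeq : (lowS n).filter
        (fun x : Fin (2*n) => (x : ℕ) % d ∈ A.image (fun x : Fin (2*n) => (x : ℕ) % d)) = A := by
      apply Finset.Subset.antisymm
      · intro y hy
        rw [Finset.mem_filter] at hy
        obtain ⟨hyl, hyc⟩ := hy
        rcases Finset.mem_image.mp hyc with ⟨x, hx, hxc⟩
        have hyn : (y : ℕ) < n := by simpa [lowS] using hyl
        exact hchar x hx y hyn hxc.symm
      · intro x hx
        rw [Finset.mem_filter]
        exact ⟨hAsub hx, Finset.mem_image_of_mem _ hx⟩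
    have := hcardT (A.image (fun x : Fin (2*n) => (x : ℕ) % d)) hTsub
    rw [hAeq, hAcard] at this
    have : (A.image (fun x : Fin (2*n) => (x : ℕ) % d)).card * q = q * e := by omega
    have hq' : q ≠ 0 := hq0.ne'
    nlinarith [this]
  · -- backward maps into filter
    intro T hT
    rw [Finset.mem_powersetCard] at hT
    obtain ⟨hTsub, hTcard⟩ := hT
    rw [Finset.mem_filter, Finset.mem_powerset]
    refine ⟨Finset.filter_subset _ _, ?_, ?_⟩
    · rw [inv_char hn σ hσ h hh _ (Finset.filter_subset _ _)]
      intro x hx y hy hyd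
      rw [Finset.mem_filter] at hx ⊢
      constructor
      · simp only [lowS, Finset.mem_filter]
        exact ⟨Finset.mem_univ _, hy⟩
      · rw [hyd]; exact hx.2
    · rw [hcardT T hTsub, hTcard, hke]
      ring
  · -- left inverse
    intro A hA
    rw [Finset.mem_filter, Finset.mem_powerset] at hA
    obtain ⟨hAsub, hAinv, hAcard⟩ := hA
    have hchar := (inv_char hn σ hσ h hh A hAsub).mp hAinv
    apply Finset.Subset.antisymm
    · intro y hy
      rw [Finset.mem_filter] at hy
      obtain ⟨hyl, hyc⟩ := hy
      rcases Finset.mem_image.mp hyc with ⟨x, hx, hxc⟩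
      have hyn : (y : ℕ) < n := by simpa [lowS] using hyl
      exact hchar x hx y hyn hxc.symm
    · intro x hx
      rw [Finset.mem_filter]
      exact ⟨hAsub hx, Finset.mem_image_of_mem _ hx⟩
  · -- right inverse
    intro T hT
    rw [Finset.mem_powersetCard] at hT
    obtain ⟨hTsub, hTcard⟩ := hT
    apply Finset.Subset.antisymm
    · intro c hc
      rcases Finset.mem_image.mp hc with ⟨x, hx, rfl⟩
      exact (Finset.mem_filter.mp hx).2
    · intro c hc
      have hcd : c < d := Finset.mem_range.mp (hTsub hc)
      have hcn : c < n := by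
        have : d ≤ n := Nat.le_of_dvd hn hdn
        omega
      have hc2n : c < 2 * n := by omega
      rw [Finset.mem_image]
      refine ⟨⟨c, hc2n⟩, ?_, ?_⟩
      · rw [Finset.mem_filter]
        constructor
        · simp only [lowS, Finset.mem_filter]
          exact ⟨Finset.mem_univ _, hcn⟩
        · show (c % d) ∈ T
          rwa [Nat.mod_eq_of_lt hcd]
      · show c % d = c
        exact Nat.mod_eq_of_lt hcd

end Inv


/-- Equation (17): when `d_h = gcd(n,h) ≠ 1` and `n/d_h ∣ k`,
`Σ_{π ∈ P} (F k (σ^h π) - F (k-1) (σ^h π)) = C(d_h, l_k) ⬝ n!` with `l_k = k⬝d_h/n`. -/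
theorem eq17 (n k h : ℕ) (hk : 1 ≤ k) (hn : 2 * k ≤ n)
    (hh1 : 1 < h) (hh2 : h < n) (hd : Nat.gcd n h ≠ 1)
    (hdiv : (n / Nat.gcd n h) ∣ k) (σ : Equiv.Perm (Fin (2 * n)))
    (hσ : ∀ i : Fin (2 * n),
      ((σ i : ℕ) = if (i : ℕ) < n then ((i : ℕ) + 1) % n else (i : ℕ))) :
    ∑ π ∈ (Finset.univ : Finset (Equiv.Perm (Fin (2 * n)))).filter
        (fun π => ∀ i : Fin (2 * n), (i : ℕ) < n → π i = i),
      ((F k (σ ^ h * π) : ℤ) - (F (k - 1) (σ ^ h * π) : ℤ))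
      = ((Nat.gcd n h).choose (k * Nat.gcd n h / n) : ℤ) * (n.factorial : ℤ) := by
  classical
  have hn0 : 0 < n := by omega
  have hSk := main_count hn0 σ hσ h k (show k ≤ n by omega)
  have hSk1 := main_count hn0 σ hσ h (k - 1) (show k - 1 ≤ n by omega)
  have hN := ninv_card hn0 σ hσ h k (show 0 < h by omega) hdiv
  have hsplit : ((lowS n).powerset.filter
        (fun A => A.image ⇑(σ ^ h) = A ∧ A.card ≤ k)).card
      = ((lowS n).powerset.filter
        (fun A => A.image ⇑(σ ^ h) = A ∧ A.card ≤ k - 1)).card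
      + ((lowS n).powerset.filter
        (fun A => A.image ⇑(σ ^ h) = A ∧ A.card = k)).card := by
    have heq : (lowS n).powerset.filter
        (fun A => A.image ⇑(σ ^ h) = A ∧ A.card ≤ k)
      = ((lowS n).powerset.filter
          (fun A => A.image ⇑(σ ^ h) = A ∧ A.card ≤ k - 1)) ∪
        ((lowS n).powerset.filter
          (fun A => A.image ⇑(σ ^ h) = A ∧ A.card = k)) := by
      rw [← Finset.filter_or]
      apply Finset.filter_congr
      intro A _
      constructor
      · rintro ⟨h1, h2⟩
        by_cases hc : A.card = k
        · exact Or.inr ⟨h1, hc⟩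
        · exact Or.inl ⟨h1, by omega⟩
      · rintro (⟨h1, h2⟩ | ⟨h1, h2⟩) <;> exact ⟨h1, by omega⟩
    rw [heq, Finset.card_union_of_disjoint]
    rw [Finset.disjoint_left]
    intro A hA1 hA2
    rw [Finset.mem_filter] at hA1 hA2
    have := hA1.2.2
    have := hA2.2.2
    omega
  rw [Finset.sum_sub_distrib, ← Nat.cast_sum, ← Nat.cast_sum, hSk, hSk1, hsplit, hN]
  push_cast
  ring
end
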